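/- For every positive integer k, 2 · ∑_{i=0}^{k} [C(k,i)/C(2k,i)] · (i+1)/(2k+1) · 1/(2k+2) = 2/(k^2 + 3k + 2). -/

import Mathlib

private lemma tele_step (k i : ℕ) (hk : 1 ≤ k) (hi : i ≤ k) :
    ((k.choose i : ℚ) / ((2 * k).choose i : ℚ)) * ((i : ℚ) + 1)
      = ((4*(k:ℚ)+2) + (2*(k:ℚ)-1)*(i:ℚ) - (i:ℚ)^2) / ((k:ℚ)+2)
          * ((k.choose i : ℚ) / ((2 * k).choose i : ℚ))
        - ((4*(k:ℚ)+2) + (2*(k:ℚ)-1)*((i:ℚ)+1) - ((i:ℚ)+1)^2) / ((k:ℚ)+2)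
          * ((k.choose (i+1) : ℚ) / ((2 * k).choose (i+1) : ℚ)) := by
  have hi2 : i ≤ 2 * k := by omega
  have ha : ((k.choose (i+1) : ℚ)) * ((i:ℚ)+1) = (k.choose i : ℚ) * ((k:ℚ) - i) := by
    have h := Nat.choose_succ_right_eq k i
    have h' : ((k.choose (i+1) * (i+1) : ℕ) : ℚ) = ((k.choose i * (k - i) : ℕ) : ℚ) :=
      congrArg (fun n : ℕ => (n:ℚ)) h
    push_cast [Nat.cast_sub hi] at h'
    linarith [h']
  have hb : (((2*k).choose (i+1) : ℚ)) * ((i:ℚ)+1) = ((2*k).choose i : ℚ) * (2*(k:ℚ) - i) := by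
    have h := Nat.choose_succ_right_eq (2*k) i
    have h' : (((2*k).choose (i+1) * (i+1) : ℕ) : ℚ) = (((2*k).choose i * (2*k - i) : ℕ) : ℚ) :=
      congrArg (fun n : ℕ => (n:ℚ)) h
    push_cast [Nat.cast_sub hi2] at h'
    linarith [h']
  have hb0 : (((2*k).choose i : ℚ)) ≠ 0 := by
    exact_mod_cast (Nat.choose_pos hi2).ne'
  have hb0' : (((2*k).choose (i+1) : ℚ)) ≠ 0 := by
    exact_mod_cast (Nat.choose_pos (by omega : i + 1 ≤ 2*k)).ne'
  have hi1 : ((i:ℚ)+1) ≠ 0 := by positivity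
  have h2ki : (2*(k:ℚ) - i) ≠ 0 := by
    have : (i:ℚ) ≤ k := by exact_mod_cast hi
    have hk1 : (1:ℚ) ≤ (k:ℚ) := by exact_mod_cast hk
    nlinarith
  have hk2 : ((k:ℚ)+2) ≠ 0 := by positivity
  have hA : (k.choose (i+1) : ℚ) = (k.choose i : ℚ) * ((k:ℚ) - i) / ((i:ℚ)+1) := by
    field_simp
    linarith [ha]
  have hB : (((2*k).choose (i+1) : ℚ)) = ((2*k).choose i : ℚ) * (2*(k:ℚ) - i) / ((i:ℚ)+1) := by
    field_simp
    linarith [hb]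
  rw [hA, hB]
  have h2ki' : (k:ℚ)*2 - i ≠ 0 := by rwa [mul_comm]
  field_simp
  ring

theorem stmt_10 (k : ℕ) (hk : 1 ≤ k) :
    2 * ∑ i ∈ Finset.range (k + 1),
        ((k.choose i : ℚ) / ((2 * k).choose i : ℚ))
          * (((i : ℚ) + 1) / (2 * (k : ℚ) + 1)) * (1 / (2 * (k : ℚ) + 2))
      = 2 / ((k : ℚ) ^ 2 + 3 * (k : ℚ) + 2) := by
  set g : ℕ → ℚ := fun i =>
    ((4*(k:ℚ)+2) + (2*(k:ℚ)-1)*(i:ℚ) - (i:ℚ)^2) / ((k:ℚ)+2)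
      * ((k.choose i : ℚ) / ((2 * k).choose i : ℚ)) with hg
  have key : ∑ i ∈ Finset.range (k + 1),
      ((k.choose i : ℚ) / ((2 * k).choose i : ℚ)) * ((i : ℚ) + 1)
      = (4*(k:ℚ)+2) / ((k:ℚ)+2) := by
    have h1 : ∑ i ∈ Finset.range (k + 1),
        ((k.choose i : ℚ) / ((2 * k).choose i : ℚ)) * ((i : ℚ) + 1)
        = ∑ i ∈ Finset.range (k + 1), (g i - g (i+1)) := by
      apply Finset.sum_congr rfl
      intro i hi
      have hik : i ≤ k := by
        have := Finset.mem_range.mp hi; omega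
      have := tele_step k i hk hik
      simpa [hg] using this
    rw [h1, Finset.sum_range_sub']
    have hgk : g (k+1) = 0 := by
      simp [hg, Nat.choose_succ_self]
    rw [hgk]
    simp [hg]
  have hsum : ∑ i ∈ Finset.range (k + 1),
        ((k.choose i : ℚ) / ((2 * k).choose i : ℚ))
          * (((i : ℚ) + 1) / (2 * (k : ℚ) + 1)) * (1 / (2 * (k : ℚ) + 2))
      = (∑ i ∈ Finset.range (k + 1),
          ((k.choose i : ℚ) / ((2 * k).choose i : ℚ)) * ((i : ℚ) + 1))
        * (1 / ((2 * (k : ℚ) + 1) * (2 * (k : ℚ) + 2))) := by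
    rw [Finset.sum_mul]
    apply Finset.sum_congr rfl
    intro i _
    have h1 : (2*(k:ℚ)+1) ≠ 0 := by positivity
    have h2 : (2*(k:ℚ)+2) ≠ 0 := by positivity
    field_simp
  rw [hsum, key]
  have h1 : (2*(k:ℚ)+1) ≠ 0 := by positivity
  have h2 : (2*(k:ℚ)+2) ≠ 0 := by positivity
  have h3 : ((k:ℚ)+2) ≠ 0 := by positivity
  have h4 : ((k:ℚ)^2 + 3*(k:ℚ) + 2) ≠ 0 := by positivity
  field_simp
  ring
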